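/- Let A⁺, A⁻ > 0 and γ⁺, γ⁻ > 1, and define the pressure laws P⁺(s) = A⁺ s^{γ⁺} and P⁻(s) = A⁻ s^{γ⁻} for s > 0. Then for any R⁺ > 0 and R⁻ > 0 there exists a unique ρ⁺ > R⁺ such that P⁺(ρ⁺) = P⁻( R⁻ ρ⁺ / (ρ⁺ − R⁺) ). -/

import Mathlib

/-- Solvability of the equal-pressure constraint: for any fraction densities
R⁺, R⁻ > 0 there is a unique ρ⁺ > R⁺ with P⁺(ρ⁺) = P⁻(R⁻ρ⁺/(ρ⁺ − R⁺)). -/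
theorem stmt_17 (Ap Am γp γm : ℝ) (hAp : 0 < Ap) (hAm : 0 < Am)
    (hγp : 1 < γp) (hγm : 1 < γm)
    (Pp Pm : ℝ → ℝ) (hPp : ∀ s : ℝ, 0 < s → Pp s = Ap * s ^ γp)
    (hPm : ∀ s : ℝ, 0 < s → Pm s = Am * s ^ γm) :
    ∀ Rp Rm : ℝ, 0 < Rp → 0 < Rm →
      ∃! ρ : ℝ, ρ > Rp ∧ Pp ρ = Pm (Rm * ρ / (ρ - Rp)) := by
  intro Rp Rm hRp hRm
  have hγp0 : (0:ℝ) < γp := lt_trans one_pos hγp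
  have hγm0 : (0:ℝ) < γm := lt_trans one_pos hγm
  set g : ℝ → ℝ := fun ρ => Rm * ρ / (ρ - Rp) with hgdef
  set f : ℝ → ℝ := fun ρ => Ap * ρ ^ γp - Am * (g ρ) ^ γm with hfdef
  -- decomposition of g
  have hgdecomp : ∀ ρ : ℝ, Rp < ρ → g ρ = Rm + Rm * Rp / (ρ - Rp) := by
    intro ρ hρ
    have h : ρ - Rp ≠ 0 := ne_of_gt (by linarith)
    simp only [hgdef]
    field_simp
    ring
  have hgpos : ∀ ρ : ℝ, Rp < ρ → 0 < g ρ := by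
    intro ρ hρ
    have h1 : 0 < ρ - Rp := by linarith
    have h2 : 0 < ρ := lt_trans hRp hρ
    exact div_pos (mul_pos hRm h2) h1
  -- strict monotonicity of f on (Rp, ∞)
  have hmono : ∀ x y : ℝ, Rp < x → x < y → f x < f y := by
    intro x y hx hxy
    have hx0 : 0 < x := lt_trans hRp hx
    have hy : Rp < y := lt_trans hx hxy
    have h1 : Ap * x ^ γp < Ap * y ^ γp :=
      mul_lt_mul_of_pos_left (Real.rpow_lt_rpow (le_of_lt hx0) hxy hγp0) hAp
    have hxm : 0 < x - Rp := by linarith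
    have hym : 0 < y - Rp := by linarith
    have hgy : g y < g x := by
      rw [hgdecomp x hx, hgdecomp y hy]
      have : Rm * Rp / (y - Rp) < Rm * Rp / (x - Rp) :=
        div_lt_div_of_pos_left (mul_pos hRm hRp) hxm (by linarith)
      linarith
    have hgy0 : 0 < g y := hgpos y hy
    have h2 : Am * (g y) ^ γm < Am * (g x) ^ γm :=
      mul_lt_mul_of_pos_left (Real.rpow_lt_rpow (le_of_lt hgy0) hgy hγm0) hAm
    simp only [hfdef]
    linarith
  -- left endpoint a with f a ≤ 0
  have hK : 0 < Ap * (Rp + 1) ^ γp :=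
    mul_pos hAp (Real.rpow_pos_of_pos (by linarith) _)
  set K := Ap * (Rp + 1) ^ γp with hKdef
  set s := max 1 (K / Am) with hsdef
  have hs1 : (1:ℝ) ≤ s := le_max_left _ _
  have hs0 : (0:ℝ) < s := lt_of_lt_of_le one_pos hs1
  have hsK : K ≤ Am * s ^ γm := by
    have h1 : s ^ (1:ℝ) ≤ s ^ γm := Real.rpow_le_rpow_of_exponent_le hs1 (le_of_lt hγm)
    rw [Real.rpow_one] at h1
    have h2 : K / Am ≤ s := le_max_right _ _
    have h3 : K ≤ Am * s := by
      rw [div_le_iff₀ hAm] at h2; linarith [h2]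
    calc K ≤ Am * s := h3
      _ ≤ Am * s ^ γm := by nlinarith
  set a := Rp + min 1 (Rm * Rp / s) with hadef
  have hmin0 : 0 < min 1 (Rm * Rp / s) :=
    lt_min one_pos (div_pos (mul_pos hRm hRp) hs0)
  have haRp : Rp < a := by simp only [hadef]; linarith
  have ha1 : a ≤ Rp + 1 := by
    simp only [hadef]
    have := min_le_left 1 (Rm * Rp / s); linarith
  have hfa : f a ≤ 0 := by
    have hamRp : 0 < a - Rp := by linarith
    have hle : a - Rp ≤ Rm * Rp / s := by
      simp only [hadef]; simpa using min_le_right 1 (Rm * Rp / s)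
    have hga : s ≤ g a := by
      rw [hgdecomp a haRp]
      have h1 : s ≤ Rm * Rp / (a - Rp) := by
        rw [le_div_iff₀ hamRp]
        calc s * (a - Rp) ≤ s * (Rm * Rp / s) :=
              mul_le_mul_of_nonneg_left hle (le_of_lt hs0)
          _ = Rm * Rp := by field_simp
      linarith
    have h2 : Am * s ^ γm ≤ Am * (g a) ^ γm :=
      mul_le_mul_of_nonneg_left (Real.rpow_le_rpow (le_of_lt hs0) hga (le_of_lt hγm0)) (le_of_lt hAm)
    have h3 : Ap * a ^ γp ≤ K := by
      rw [hKdef]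
      exact mul_le_mul_of_nonneg_left
        (Real.rpow_le_rpow (by linarith : (0:ℝ) ≤ a) ha1 (le_of_lt hγp0)) (le_of_lt hAp)
    simp only [hfdef]
    linarith
  -- right endpoint b with f b ≥ 0
  set C := Rm + Rm * Rp with hCdef
  have hC0 : 0 < C := by simp only [hCdef]; nlinarith
  set M := Am * C ^ γm with hMdef
  have hM0 : 0 < M := mul_pos hAm (Real.rpow_pos_of_pos hC0 _)
  set t := max 1 (M / Ap) with htdef
  have ht1 : (1:ℝ) ≤ t := le_max_left _ _
  have htM : M ≤ Ap * t ^ γp := by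
    have h1 : t ^ (1:ℝ) ≤ t ^ γp := Real.rpow_le_rpow_of_exponent_le ht1 (le_of_lt hγp)
    rw [Real.rpow_one] at h1
    have h2 : M / Ap ≤ t := le_max_right _ _
    have h3 : M ≤ Ap * t := by rw [div_le_iff₀ hAp] at h2; linarith
    calc M ≤ Ap * t := h3
      _ ≤ Ap * t ^ γp := by nlinarith
  set b := max (Rp + 1) t with hbdef
  have hb1 : Rp + 1 ≤ b := le_max_left _ _
  have hbt : t ≤ b := le_max_right _ _
  have hbRp : Rp < b := by linarith
  have hab : a ≤ b := le_trans ha1 hb1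
  have hfb : 0 ≤ f b := by
    have hbm : (1:ℝ) ≤ b - Rp := by linarith
    have hgb : g b ≤ C := by
      rw [hgdecomp b hbRp, hCdef]
      have : Rm * Rp / (b - Rp) ≤ Rm * Rp := by
        rw [div_le_iff₀ (by linarith : (0:ℝ) < b - Rp)]
        nlinarith [mul_pos hRm hRp]
      linarith
    have h2 : Am * (g b) ^ γm ≤ M := by
      rw [hMdef]
      exact mul_le_mul_of_nonneg_left
        (Real.rpow_le_rpow (le_of_lt (hgpos b hbRp)) hgb (le_of_lt hγm0)) (le_of_lt hAm)
    have h3 : Ap * t ^ γp ≤ Ap * b ^ γp :=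
      mul_le_mul_of_nonneg_left
        (Real.rpow_le_rpow (by linarith : (0:ℝ) ≤ t) hbt (le_of_lt hγp0)) (le_of_lt hAp)
    simp only [hfdef]
    linarith
  -- continuity of f on [a, b]
  have hcont : ContinuousOn f (Set.Icc a b) := by
    have hsub : ∀ x ∈ Set.Icc a b, Rp < x := fun x hx => lt_of_lt_of_le haRp hx.1
    have hc1 : ContinuousOn (fun ρ : ℝ => Ap * ρ ^ γp) (Set.Icc a b) := by
      apply ContinuousOn.mul continuousOn_const
      apply ContinuousOn.rpow_const continuousOn_id
      intro x hx
      exact Or.inl (ne_of_gt (lt_trans hRp (hsub x hx)))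
    have hcg : ContinuousOn g (Set.Icc a b) := by
      apply ContinuousOn.div
      · exact (continuousOn_const.mul continuousOn_id)
      · exact (continuousOn_id.sub continuousOn_const)
      · intro x hx
        exact ne_of_gt (by linarith [hsub x hx])
    have hc2 : ContinuousOn (fun ρ : ℝ => Am * (g ρ) ^ γm) (Set.Icc a b) := by
      apply ContinuousOn.mul continuousOn_const
      apply ContinuousOn.rpow_const hcg
      intro x hx
      exact Or.inl (ne_of_gt (hgpos x (hsub x hx)))
    exact hc1.sub hc2
  -- IVT
  have h0mem : (0:ℝ) ∈ Set.Icc (f a) (f b) := ⟨hfa, hfb⟩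
  obtain ⟨ρ, hρmem, hρ0⟩ := intermediate_value_Icc hab hcont h0mem
  have hρRp : Rp < ρ := lt_of_lt_of_le haRp hρmem.1
  have hρpos : 0 < ρ := lt_trans hRp hρRp
  have key : ∀ x : ℝ, Rp < x → (Pp x = Pm (Rm * x / (x - Rp)) ↔ f x = 0) := by
    intro x hx
    have hx0 : 0 < x := lt_trans hRp hx
    rw [hPp x hx0, hPm _ (hgpos x hx)]
    simp only [hfdef, hgdef]
    constructor
    · intro h; linarith
    · intro h; linarith
  refine ⟨ρ, ⟨hρRp, (key ρ hρRp).mpr hρ0⟩, ?_⟩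
  rintro y ⟨hyRp, hyeq⟩
  have hy0 : f y = 0 := (key y hyRp).mp hyeq
  by_contra hne
  rcases lt_or_gt_of_ne hne with h | h
  · have := hmono y ρ hyRp h; rw [hy0, hρ0] at this; exact lt_irrefl 0 this
  · have := hmono ρ y hρRp h; rw [hy0, hρ0] at this; exact lt_irrefl 0 this
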